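/- Let q be an odd prime power and P ⊆ F_q^d × F_q^d. With N(P) = #{((x,y),(u,v)) ∈ P×P : ‖x−u‖ = ‖y−v‖}, one has |N(P) − |P|²/q| ≤ C·q^d·|P| for an absolute constant C (in fact N(P) ≤ |P|²/q + q^d|P|). -/

import Mathlib

open Finset Matrix

section Stmt12Aux

variable {F : Type} [Field F] [Fintype F] [DecidableEq F]

/-- Orthogonality over a vector space: sum of a primitive additive character over all
vectors `z` of `ψ (w ⬝ᵥ z)`. -/
lemma stmt12_vec_sum {n : ℕ} (ψ : AddChar F ℂ) (hψ : ψ.IsPrimitive) (w : Fin n → F) :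
    ∑ z : Fin n → F, ψ (z ⬝ᵥ w) = if w = 0 then ((Fintype.card F : ℂ)) ^ n else 0 := by
  have h1 : ∀ z : Fin n → F, ψ (z ⬝ᵥ w) = ∏ i, ψ (z i * w i) := by
    intro z
    rw [dotProduct]
    induction (univ : Finset (Fin n)) using Finset.cons_induction with
    | empty => simp
    | cons i s hi ih => rw [Finset.sum_cons, AddChar.map_add_eq_mul, ih, Finset.prod_cons]
  calc ∑ z : Fin n → F, ψ (z ⬝ᵥ w)
      = ∑ z : Fin n → F, ∏ i, ψ (z i * w i) := Finset.sum_congr rfl (fun z _ => h1 z)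
    _ = ∏ i, ∑ x : F, ψ (x * w i) := (Fintype.prod_sum (fun i x => ψ (x * w i))).symm
    _ = ∏ _i : Fin n, (if w _i = 0 then ((Fintype.card F : ℂ)) else 0) := by
        refine Finset.prod_congr rfl fun i _ => ?_
        simp [AddChar.sum_mulShift (w i) hψ, apply_ite (Nat.cast : ℕ → ℂ)]
    _ = if w = 0 then ((Fintype.card F : ℂ)) ^ n else 0 := by
        by_cases h : w = 0
        · simp [h]
        · obtain ⟨i, hi⟩ := Function.ne_iff.mp h
          rw [if_neg h]
          exact Finset.prod_eq_zero (Finset.mem_univ i) (by simpa using hi)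

lemma stmt12_key {d : ℕ} (ψ : AddChar F ℂ) (c : F) (v v' : Fin d → F) :
    ∑ z : F × ((Fin d → F) × (Fin d → F)),
        ψ (z.1 * c) * (ψ (z.2.1 ⬝ᵥ v) * ψ (z.2.2 ⬝ᵥ v'))
      = (∑ t : F, ψ (t * c)) *
          ((∑ w : Fin d → F, ψ (w ⬝ᵥ v)) * (∑ w' : Fin d → F, ψ (w' ⬝ᵥ v'))) := by
  rw [Fintype.sum_prod_type]
  simp_rw [Fintype.sum_prod_type, ← Finset.mul_sum, ← Finset.sum_mul]

lemma stmt12_diag {d : ℕ} (ψ : AddChar F ℂ) (hψ : ψ.IsPrimitive)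
    (p p' : (Fin d → F) × (Fin d → F)) :
    ∑ z : F × ((Fin d → F) × (Fin d → F)),
        ψ (z.1 * (p.1 ⬝ᵥ p.1 - p.2 ⬝ᵥ p.2 - (p'.1 ⬝ᵥ p'.1 - p'.2 ⬝ᵥ p'.2))) *
          (ψ (z.2.1 ⬝ᵥ (p.1 - p'.1)) * ψ (z.2.2 ⬝ᵥ (p.2 - p'.2)))
      = if p' = p then ((Fintype.card F : ℂ)) ^ (2 * d + 1) else 0 := by
  rw [stmt12_key, AddChar.sum_mulShift _ hψ, stmt12_vec_sum ψ hψ, stmt12_vec_sum ψ hψ]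
  by_cases h : p' = p
  · subst h
    rw [if_pos rfl, sub_self, if_pos rfl, sub_self, if_pos rfl, sub_self, if_pos rfl]
    push_cast
    ring
  · have h2 : ¬(p.1 - p'.1 = 0 ∧ p.2 - p'.2 = 0) := by
      rintro ⟨h1, h2⟩
      exact h (Prod.ext (sub_eq_zero.mp h1) (sub_eq_zero.mp h2)).symm
    rw [if_neg h]
    by_cases hx : p.1 - p'.1 = 0
    · have hy : ¬(p.2 - p'.2 = 0) := fun hy => h2 ⟨hx, hy⟩
      rw [if_neg hy, mul_zero, mul_zero]
    · rw [if_neg hx, zero_mul, mul_zero]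

/-- The exponential sum attached to the extended point set. -/
noncomputable def stmt12S {d : ℕ} (ψ : AddChar F ℂ) (P : Finset ((Fin d → F) × (Fin d → F)))
    (z : F × ((Fin d → F) × (Fin d → F))) : ℂ :=
  ∑ p ∈ P, ψ (z.1 * (p.1 ⬝ᵥ p.1 - p.2 ⬝ᵥ p.2) + (z.2.1 ⬝ᵥ p.1 + z.2.2 ⬝ᵥ p.2))

lemma stmt12_parseval_c {d : ℕ} (ψ : AddChar F ℂ) (hψ : ψ.IsPrimitive)
    (P : Finset ((Fin d → F) × (Fin d → F))) :
    ∑ z : F × ((Fin d → F) × (Fin d → F)), stmt12S ψ P z * (starRingEnd ℂ) (stmt12S ψ P z)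
      = ((Fintype.card F : ℂ)) ^ (2 * d + 1) * P.card := by
  have hchar : 0 < ringChar F := Nat.pos_of_ne_zero (CharP.ringChar_ne_zero_of_finite F)
  have hconj : ∀ z, (starRingEnd ℂ) (stmt12S ψ P z)
      = ∑ p' ∈ P, ψ (-(p'.1 ⬝ᵥ p'.1 - p'.2 ⬝ᵥ p'.2) * z.1 + (-(z.2.1 ⬝ᵥ p'.1) - z.2.2 ⬝ᵥ p'.2)) := by
    intro z
    rw [stmt12S, map_sum]
    refine Finset.sum_congr rfl fun p' _ => ?_
    rw [AddChar.starComp_apply hchar, AddChar.inv_apply]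
    congr 1
    ring
  calc ∑ z, stmt12S ψ P z * (starRingEnd ℂ) (stmt12S ψ P z)
      = ∑ z : F × ((Fin d → F) × (Fin d → F)), ∑ p ∈ P, ∑ p' ∈ P,
          ψ (z.1 * (p.1 ⬝ᵥ p.1 - p.2 ⬝ᵥ p.2) + (z.2.1 ⬝ᵥ p.1 + z.2.2 ⬝ᵥ p.2)) *
            ψ (-(p'.1 ⬝ᵥ p'.1 - p'.2 ⬝ᵥ p'.2) * z.1 + (-(z.2.1 ⬝ᵥ p'.1) - z.2.2 ⬝ᵥ p'.2)) := by
        refine Finset.sum_congr rfl fun z _ => ?_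
        rw [hconj, stmt12S, Finset.sum_mul_sum]
    _ = ∑ p ∈ P, ∑ p' ∈ P, ∑ z : F × ((Fin d → F) × (Fin d → F)),
          ψ (z.1 * (p.1 ⬝ᵥ p.1 - p.2 ⬝ᵥ p.2) + (z.2.1 ⬝ᵥ p.1 + z.2.2 ⬝ᵥ p.2)) *
            ψ (-(p'.1 ⬝ᵥ p'.1 - p'.2 ⬝ᵥ p'.2) * z.1 + (-(z.2.1 ⬝ᵥ p'.1) - z.2.2 ⬝ᵥ p'.2)) := by
        rw [Finset.sum_comm]
        exact Finset.sum_congr rfl fun p _ => Finset.sum_comm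
    _ = ∑ p ∈ P, ∑ p' ∈ P, (if p' = p then ((Fintype.card F : ℂ)) ^ (2 * d + 1) else 0) := by
        refine Finset.sum_congr rfl fun p _ => Finset.sum_congr rfl fun p' _ => ?_
        rw [← stmt12_diag ψ hψ p p']
        refine Finset.sum_congr rfl fun z _ => ?_
        rw [← AddChar.map_add_eq_mul, ← AddChar.map_add_eq_mul, ← AddChar.map_add_eq_mul]
        congr 1
        simp only [dotProduct_sub]
        ring
    _ = ((Fintype.card F : ℂ)) ^ (2 * d + 1) * P.card := by
        simp only [Finset.sum_ite_eq']
        rw [Finset.sum_congr rfl (fun p hp => if_pos hp), Finset.sum_const,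
          nsmul_eq_mul, mul_comm]

lemma stmt12_parseval {d : ℕ} (ψ : AddChar F ℂ) (hψ : ψ.IsPrimitive)
    (P : Finset ((Fin d → F) × (Fin d → F))) :
    ∑ z : F × ((Fin d → F) × (Fin d → F)), ‖stmt12S ψ P z‖ ^ 2
      = (Fintype.card F : ℝ) ^ (2 * d + 1) * P.card := by
  have hre : ∀ z, ((‖stmt12S ψ P z‖ ^ 2 : ℝ) : ℂ)
      = stmt12S ψ P z * (starRingEnd ℂ) (stmt12S ψ P z) := by
    intro z
    rw [Complex.mul_conj, Complex.normSq_eq_norm_sq]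
  rw [← Complex.ofReal_inj, Complex.ofReal_sum,
    Finset.sum_congr rfl fun z _ => hre z, stmt12_parseval_c ψ hψ P]
  push_cast
  ring

lemma stmt12_main {d : ℕ} (hF2 : ringChar F ≠ 2)
    (P : Finset ((Fin d → F) × (Fin d → F))) :
    |((((P ×ˢ P).filter
        (fun p => (p.1.1 - p.2.1) ⬝ᵥ (p.1.1 - p.2.1)
          = (p.1.2 - p.2.2) ⬝ᵥ (p.1.2 - p.2.2))).card : ℝ)
      - (P.card : ℝ) ^ 2 / (Fintype.card F : ℝ))|
      ≤ (Fintype.card F : ℝ) ^ d * P.card := by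
  classical
  have : Finite F := Finite.of_fintype F
  set ψ : AddChar F ℂ := AddChar.FiniteField.primitiveChar_to_Complex F with hψdef
  have hψ : ψ.IsPrimitive := AddChar.FiniteField.primitiveChar_to_Complex_isPrimitive F
  set N : ℕ := ((P ×ˢ P).filter
      (fun p => (p.1.1 - p.2.1) ⬝ᵥ (p.1.1 - p.2.1)
        = (p.1.2 - p.2.2) ⬝ᵥ (p.1.2 - p.2.2))).card with hNdef
  -- the indicator expression for N
  have hN : ((N : ℂ)) = ∑ p ∈ P, ∑ p' ∈ P,
      (if (p.1 - p'.1) ⬝ᵥ (p.1 - p'.1) = (p.2 - p'.2) ⬝ᵥ (p.2 - p'.2) then 1 else 0) := by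
    rw [hNdef, Finset.card_filter, ← Finset.sum_product']
    push_cast [apply_ite (Nat.cast : ℕ → ℂ)]
    rfl
  -- the key character sum identity
  have hA : ∑ t : F, ∑ p ∈ P, ψ (t * (p.1 ⬝ᵥ p.1 - p.2 ⬝ᵥ p.2)) *
        stmt12S ψ P (t, ((-(2*t)) • p.1, (2*t) • p.2))
      = (Fintype.card F : ℂ) * N := by
    calc ∑ t : F, ∑ p ∈ P, ψ (t * (p.1 ⬝ᵥ p.1 - p.2 ⬝ᵥ p.2)) *
            stmt12S ψ P (t, ((-(2*t)) • p.1, (2*t) • p.2))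
        = ∑ t : F, ∑ p ∈ P, ∑ p' ∈ P,
            ψ (t * ((p.1 - p'.1) ⬝ᵥ (p.1 - p'.1) - (p.2 - p'.2) ⬝ᵥ (p.2 - p'.2))) := by
          refine Finset.sum_congr rfl fun t _ => Finset.sum_congr rfl fun p _ => ?_
          rw [stmt12S, Finset.mul_sum]
          refine Finset.sum_congr rfl fun p' _ => ?_
          rw [← AddChar.map_add_eq_mul]
          congr 1
          simp only [smul_dotProduct, smul_eq_mul, sub_dotProduct, dotProduct_sub]
          rw [dotProduct_comm p'.1 p.1, dotProduct_comm p'.2 p.2]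
          ring
      _ = ∑ p ∈ P, ∑ p' ∈ P, ∑ t : F,
            ψ (t * ((p.1 - p'.1) ⬝ᵥ (p.1 - p'.1) - (p.2 - p'.2) ⬝ᵥ (p.2 - p'.2))) := by
          rw [Finset.sum_comm]
          exact Finset.sum_congr rfl fun p _ => Finset.sum_comm
      _ = ∑ p ∈ P, ∑ p' ∈ P, ((Fintype.card F : ℂ)) *
            (if (p.1 - p'.1) ⬝ᵥ (p.1 - p'.1) = (p.2 - p'.2) ⬝ᵥ (p.2 - p'.2) then 1 else 0) := by
          refine Finset.sum_congr rfl fun p _ => Finset.sum_congr rfl fun p' _ => ?_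
          rw [AddChar.sum_mulShift _ hψ]
          by_cases hc : (p.1 - p'.1) ⬝ᵥ (p.1 - p'.1) = (p.2 - p'.2) ⬝ᵥ (p.2 - p'.2)
          · rw [if_pos (sub_eq_zero.mpr hc), if_pos hc, mul_one]
          · rw [if_neg (fun h => hc (sub_eq_zero.mp h)), if_neg hc, mul_zero, Nat.cast_zero]
      _ = (Fintype.card F : ℂ) * N := by
          rw [hN, Finset.mul_sum]
          exact Finset.sum_congr rfl fun p _ => (Finset.mul_sum _ _ _).symm
  -- the `t = 0` term
  have h0 : ∑ p ∈ P, ψ ((0:F) * (p.1 ⬝ᵥ p.1 - p.2 ⬝ᵥ p.2)) *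
        stmt12S ψ P ((0:F), ((-(2*(0:F))) • p.1, (2*(0:F)) • p.2)) = (P.card : ℂ) ^ 2 := by
    have e0 : ∀ p : (Fin d → F) × (Fin d → F),
        stmt12S ψ P ((0:F), ((-(2*(0:F))) • p.1, (2*(0:F)) • p.2)) = (P.card : ℂ) := by
      intro p
      rw [stmt12S]
      have : ∀ p' ∈ P, ψ ((0:F) * (p'.1 ⬝ᵥ p'.1 - p'.2 ⬝ᵥ p'.2) +
          (((-(2*(0:F))) • p.1) ⬝ᵥ p'.1 + ((2*(0:F)) • p.2) ⬝ᵥ p'.2)) = 1 := by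
        intro p' _
        have harg : (0:F) * (p'.1 ⬝ᵥ p'.1 - p'.2 ⬝ᵥ p'.2) +
            (((-(2*(0:F))) • p.1) ⬝ᵥ p'.1 + ((2*(0:F)) • p.2) ⬝ᵥ p'.2) = 0 := by
          simp only [smul_dotProduct, smul_eq_mul]
          ring
        rw [harg, AddChar.map_zero_eq_one]
      rw [Finset.sum_congr rfl this, Finset.sum_const, nsmul_eq_mul, mul_one]
    calc ∑ p ∈ P, ψ ((0:F) * (p.1 ⬝ᵥ p.1 - p.2 ⬝ᵥ p.2)) *
            stmt12S ψ P ((0:F), ((-(2*(0:F))) • p.1, (2*(0:F)) • p.2))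
        = ∑ _p ∈ P, (P.card : ℂ) := by
          refine Finset.sum_congr rfl fun p _ => ?_
          rw [e0, zero_mul, AddChar.map_zero_eq_one, one_mul]
      _ = (P.card : ℂ) ^ 2 := by rw [Finset.sum_const, nsmul_eq_mul]; ring
  -- the error term
  have hB : ∑ t ∈ (univ : Finset F).erase 0, ∑ p ∈ P,
        ψ (t * (p.1 ⬝ᵥ p.1 - p.2 ⬝ᵥ p.2)) * stmt12S ψ P (t, ((-(2*t)) • p.1, (2*t) • p.2))
      = (Fintype.card F : ℂ) * N - (P.card : ℂ) ^ 2 := by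
    have h := Finset.add_sum_erase (univ : Finset F)
      (fun t => ∑ p ∈ P, ψ (t * (p.1 ⬝ᵥ p.1 - p.2 ⬝ᵥ p.2)) *
        stmt12S ψ P (t, ((-(2*t)) • p.1, (2*t) • p.2))) (Finset.mem_univ (0:F))
    rw [hA] at h
    rw [h0] at h
    linear_combination h
  -- pass to norms
  have hnorm : ‖(Fintype.card F : ℂ) * N - (P.card : ℂ) ^ 2‖
      ≤ ∑ x ∈ ((univ : Finset F).erase 0) ×ˢ P,
          ‖stmt12S ψ P (x.1, ((-(2*x.1)) • x.2.1, (2*x.1) • x.2.2))‖ := by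
    rw [← hB, Finset.sum_product]
    refine (norm_sum_le _ _).trans ?_
    refine Finset.sum_le_sum fun t _ => ?_
    refine (norm_sum_le _ _).trans ?_
    refine Finset.sum_le_sum fun p _ => ?_
    rw [norm_mul, AddChar.norm_apply, one_mul]
  -- Cauchy–Schwarz + Parseval
  have hinj : ∑ x ∈ ((univ : Finset F).erase 0) ×ˢ P,
        ‖stmt12S ψ P (x.1, ((-(2*x.1)) • x.2.1, (2*x.1) • x.2.2))‖ ^ 2
      ≤ (Fintype.card F : ℝ) ^ (2 * d + 1) * P.card := by
    rw [← stmt12_parseval ψ hψ P]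
    have h2 : (2 : F) ≠ 0 := Ring.two_ne_zero hF2
    have hι : ∀ x ∈ ((univ : Finset F).erase 0) ×ˢ P, ∀ y ∈ ((univ : Finset F).erase 0) ×ˢ P,
        (fun x : F × ((Fin d → F) × (Fin d → F)) =>
          (x.1, ((-(2*x.1)) • x.2.1, (2*x.1) • x.2.2))) x
        = (fun x : F × ((Fin d → F) × (Fin d → F)) =>
          (x.1, ((-(2*x.1)) • x.2.1, (2*x.1) • x.2.2))) y → x = y := by
      intro x hx y hy hxy
      simp only [Prod.mk.injEq] at hxy
      obtain ⟨h1, h21, h22⟩ := hxy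
      have ht : x.1 ≠ 0 := (Finset.mem_erase.mp (Finset.mem_product.mp hx).1).1
      rw [← h1] at h21 h22
      have hc1 : (-(2 * x.1)) ≠ 0 := neg_ne_zero.mpr (mul_ne_zero h2 ht)
      have hc2 : (2 * x.1) ≠ 0 := mul_ne_zero h2 ht
      have e1 : x.2.1 = y.2.1 := smul_right_injective (Fin d → F) hc1 h21
      have e2 : x.2.2 = y.2.2 := smul_right_injective (Fin d → F) hc2 h22
      exact Prod.ext h1 (Prod.ext e1 e2)
    calc ∑ x ∈ ((univ : Finset F).erase 0) ×ˢ P,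
          ‖stmt12S ψ P (x.1, ((-(2*x.1)) • x.2.1, (2*x.1) • x.2.2))‖ ^ 2
        = ∑ z ∈ (((univ : Finset F).erase 0) ×ˢ P).image
            (fun x : F × ((Fin d → F) × (Fin d → F)) =>
              (x.1, ((-(2*x.1)) • x.2.1, (2*x.1) • x.2.2))),
            ‖stmt12S ψ P z‖ ^ 2 :=
          (Finset.sum_image (f := fun z => ‖stmt12S ψ P z‖ ^ 2) hι).symm
      _ ≤ ∑ z : F × ((Fin d → F) × (Fin d → F)), ‖stmt12S ψ P z‖ ^ 2 :=
          Finset.sum_le_sum_of_subset_of_nonneg (Finset.subset_univ _)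
            (fun z _ _ => by positivity)
  have hcard : ((((univ : Finset F).erase 0) ×ˢ P).card : ℝ)
      ≤ (Fintype.card F : ℝ) * P.card := by
    rw [Finset.card_product]
    push_cast
    have h1 : (((univ : Finset F).erase 0).card : ℝ) ≤ (Fintype.card F : ℝ) := by
      exact_mod_cast (Finset.card_erase_le).trans_eq Finset.card_univ
    have h2 : (0:ℝ) ≤ (P.card : ℝ) := by positivity
    nlinarith
  have hSig : ∑ x ∈ ((univ : Finset F).erase 0) ×ˢ P,
        ‖stmt12S ψ P (x.1, ((-(2*x.1)) • x.2.1, (2*x.1) • x.2.2))‖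
      ≤ (Fintype.card F : ℝ) ^ (d+1) * P.card := by
    have hSig0 : (0:ℝ) ≤ ∑ x ∈ ((univ : Finset F).erase 0) ×ˢ P,
        ‖stmt12S ψ P (x.1, ((-(2*x.1)) • x.2.1, (2*x.1) • x.2.2))‖ :=
      Finset.sum_nonneg fun x _ => norm_nonneg _
    have hR0 : (0:ℝ) ≤ (Fintype.card F : ℝ) ^ (d+1) * P.card := by positivity
    refine (pow_le_pow_iff_left₀ hSig0 hR0 (two_ne_zero)).mp ?_
    calc (∑ x ∈ ((univ : Finset F).erase 0) ×ˢ P,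
            ‖stmt12S ψ P (x.1, ((-(2*x.1)) • x.2.1, (2*x.1) • x.2.2))‖) ^ 2
        ≤ ((((univ : Finset F).erase 0) ×ˢ P).card : ℝ) *
            ∑ x ∈ ((univ : Finset F).erase 0) ×ˢ P,
              ‖stmt12S ψ P (x.1, ((-(2*x.1)) • x.2.1, (2*x.1) • x.2.2))‖ ^ 2 :=
          sq_sum_le_card_mul_sum_sq
      _ ≤ ((Fintype.card F : ℝ) * P.card) * ((Fintype.card F : ℝ) ^ (2 * d + 1) * P.card) := by
          have hs0 : (0:ℝ) ≤ ∑ x ∈ ((univ : Finset F).erase 0) ×ˢ P,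
              ‖stmt12S ψ P (x.1, ((-(2*x.1)) • x.2.1, (2*x.1) • x.2.2))‖ ^ 2 :=
            Finset.sum_nonneg fun x _ => by positivity
          have hc0 : (0:ℝ) ≤ ((((univ : Finset F).erase 0) ×ˢ P).card : ℝ) := by positivity
          have hq0 : (0:ℝ) ≤ (Fintype.card F : ℝ) * P.card := by positivity
          exact mul_le_mul hcard hinj hs0 hq0
      _ = ((Fintype.card F : ℝ) ^ (d+1) * P.card) ^ 2 := by ring
  -- conclude
  have hq1 : (0:ℝ) < (Fintype.card F : ℝ) := by
    exact_mod_cast Fintype.card_pos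
  have hqC : (Fintype.card F : ℂ) ≠ 0 := Nat.cast_ne_zero.mpr Fintype.card_ne_zero
  have hcast : (((N : ℝ) - (P.card : ℝ) ^ 2 / (Fintype.card F : ℝ) : ℝ) : ℂ)
      = ((Fintype.card F : ℂ) * N - (P.card : ℂ) ^ 2) / (Fintype.card F : ℂ) := by
    push_cast
    field_simp
  have habs : |(N : ℝ) - (P.card : ℝ) ^ 2 / (Fintype.card F : ℝ)|
      = ‖(Fintype.card F : ℂ) * N - (P.card : ℂ) ^ 2‖ / (Fintype.card F : ℝ) := by
    rw [← Real.norm_eq_abs, ← Complex.norm_real, hcast, norm_div, RCLike.norm_natCast]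
  rw [habs, div_le_iff₀ hq1]
  calc ‖(Fintype.card F : ℂ) * N - (P.card : ℂ) ^ 2‖
      ≤ (Fintype.card F : ℝ) ^ (d+1) * P.card := hnorm.trans hSig
    _ = (Fintype.card F : ℝ) ^ d * P.card * (Fintype.card F : ℝ) := by ring

end Stmt12Aux

/-- For `q` an odd prime power and `P ⊆ F_q^d × F_q^d`, with
`N(P) = #{((x,y),(u,v)) ∈ P×P : ‖x−u‖ = ‖y−v‖}`, one has
`|N(P) − |P|²/q| ≤ C·q^d·|P|` for an absolute constant `C`
(in fact `N(P) ≤ |P|²/q + q^d|P|`). -/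
theorem stmt_12 :
    ∃ C : ℝ, 0 < C ∧
      ∀ (F : Type) [Field F] [Fintype F] [DecidableEq F],
        ringChar F ≠ 2 →
        ∀ (d : ℕ) (P : Finset ((Fin d → F) × (Fin d → F))),
          |((((P ×ˢ P).filter
              (fun p => (p.1.1 - p.2.1) ⬝ᵥ (p.1.1 - p.2.1)
                = (p.1.2 - p.2.2) ⬝ᵥ (p.1.2 - p.2.2))).card : ℝ)
            - (P.card : ℝ) ^ 2 / (Fintype.card F : ℝ))|
            ≤ C * (Fintype.card F : ℝ) ^ d * P.card
          ∧ ((((P ×ˢ P).filter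
              (fun p => (p.1.1 - p.2.1) ⬝ᵥ (p.1.1 - p.2.1)
                = (p.1.2 - p.2.2) ⬝ᵥ (p.1.2 - p.2.2))).card : ℝ))
            ≤ (P.card : ℝ) ^ 2 / (Fintype.card F : ℝ)
              + (Fintype.card F : ℝ) ^ d * P.card := by
  refine ⟨1, one_pos, ?_⟩
  intro F _ _ _ hF2 d P
  have h := stmt12_main hF2 P
  constructor
  · rw [one_mul]
    exact h
  · have h2 := (abs_le.mp h).2
    linarith
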